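/- arXiv:1311.7673 — 5 statements merged into one kernel-verified Lean document; each statement's English description precedes it below -/
import Mathlib

section
/- Let (a,b,c) = (7m−3, 5m²−2m, 8m−3) for an integer m ≥ 4 with 3 ∤ m. Then a, b, c are pairwise coprime. -/
/-- For `(a,b,c) = (7m−3, 5m²−2m, 8m−3)` with `m ≥ 4`, `3 ∤ m`,
the integers `a, b, c` are pairwise coprime. -/
theorem stmt1 (m : ℤ) (hm : 4 ≤ m) (h3 : ¬ (3 ∣ m)) :
    IsCoprime (7 * m - 3) (5 * m ^ 2 - 2 * m) ∧
    IsCoprime (5 * m ^ 2 - 2 * m) (8 * m - 3) ∧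
    IsCoprime (7 * m - 3) (8 * m - 3) := by
  have h3m : IsCoprime (3 : ℤ) m := by
    exact (Int.prime_three.coprime_iff_not_dvd).mpr h3
  obtain ⟨u, v, huv⟩ := h3m
  have ham : IsCoprime (7 * m - 3) m := ⟨-u, v + 7 * u, by linear_combination huv⟩
  have hcm : IsCoprime (8 * m - 3) m := ⟨-u, v + 8 * u, by linear_combination huv⟩
  have ha5 : IsCoprime (7 * m - 3) (5 * m - 2) := ⟨-5, 7, by ring⟩
  have hc5 : IsCoprime (8 * m - 3) (5 * m - 2) := ⟨5, -8, by ring⟩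
  have hb : 5 * m ^ 2 - 2 * m = m * (5 * m - 2) := by ring
  refine ⟨?_, ?_, ?_⟩
  · rw [hb]; exact ham.mul_right ha5
  · rw [hb]; exact (hcm.mul_right hc5).symm
  · exact ⟨-8 * u - v, 7 * u + v, by linear_combination huv⟩
end

section
/- In the polynomial ring ℤ[x,y,z], with a = z^{3m−1} − x^{2m−1}y², b = x^{3m−1} − yz^{2m−1}, c = y³ − x^m z^m, and d₂ = x^{m−1}y⁵z^{m−1} − 3x^{2m−1}y²z^{2m−1} + x^{5m−2}y + z^{5m−2}, the identity x^m d₂ − y b² + z^{m−1} a c = 0 holds for every integer m ≥ 1. -/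
open MvPolynomial

noncomputable def px : MvPolynomial (Fin 3) ℤ := X 0
noncomputable def py : MvPolynomial (Fin 3) ℤ := X 1
noncomputable def pz : MvPolynomial (Fin 3) ℤ := X 2

noncomputable def pa (m : ℕ) : MvPolynomial (Fin 3) ℤ :=
  pz ^ (3 * m - 1) - px ^ (2 * m - 1) * py ^ 2

noncomputable def pb (m : ℕ) : MvPolynomial (Fin 3) ℤ :=
  px ^ (3 * m - 1) - py * pz ^ (2 * m - 1)

noncomputable def pc (m : ℕ) : MvPolynomial (Fin 3) ℤ :=
  py ^ 3 - px ^ m * pz ^ m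

noncomputable def pd2 (m : ℕ) : MvPolynomial (Fin 3) ℤ :=
  px ^ (m - 1) * py ^ 5 * pz ^ (m - 1) - 3 * px ^ (2 * m - 1) * py ^ 2 * pz ^ (2 * m - 1)
    + px ^ (5 * m - 2) * py + pz ^ (5 * m - 2)

/-- In `ℤ[x,y,z]`, `x^m d₂ − y b² + z^{m−1} a c = 0` for every `m ≥ 1`. -/
theorem stmt3 (m : ℕ) (hm : 1 ≤ m) :
    px ^ m * pd2 m - py * (pb m) ^ 2 + pz ^ (m - 1) * pa m * pc m = 0 := by
  obtain ⟨k, rfl⟩ : ∃ k, m = k + 1 := ⟨m - 1, (Nat.succ_pred_eq_of_pos hm).symm⟩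
  have h1 : 3 * (k + 1) - 1 = 3 * k + 2 := by omega
  have h2 : 2 * (k + 1) - 1 = 2 * k + 1 := by omega
  have h3 : (k + 1) - 1 = k := by omega
  have h4 : 5 * (k + 1) - 2 = 5 * k + 3 := by omega
  simp only [pa, pb, pc, pd2, h1, h2, h3, h4]
  ring
end

section
/- In ℤ[x,y,z], with a, b, c, d₂ as above, d₃ = −x^{3m−2}y⁷ + 2x^{m−1}y⁵z^{3m−1} + x^{4m−2}y⁴z^m − 5x^{2m−1}y²z^{4m−1} + 3x^{5m−2}yz^{2m} − x^{8m−3}z + z^{7m−2}, the identity x^{m−1} b² c + a d₂ − z^{m−1} d₃ = 0 holds for every integer m ≥ 1. -/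
open MvPolynomial

noncomputable def pd3 (m : ℕ) : MvPolynomial (Fin 3) ℤ :=
  - px ^ (3 * m - 2) * py ^ 7 + 2 * px ^ (m - 1) * py ^ 5 * pz ^ (3 * m - 1)
    + px ^ (4 * m - 2) * py ^ 4 * pz ^ m - 5 * px ^ (2 * m - 1) * py ^ 2 * pz ^ (4 * m - 1)
    + 3 * px ^ (5 * m - 2) * py * pz ^ (2 * m) - px ^ (8 * m - 3) * pz + pz ^ (7 * m - 2)

/-- In `ℤ[x,y,z]`, `x^{m−1} b² c + a d₂ − z^{m−1} d₃ = 0` for every `m ≥ 1`. -/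
theorem stmt5 (m : ℕ) (hm : 1 ≤ m) :
    px ^ (m - 1) * (pb m) ^ 2 * pc m + pa m * pd2 m - pz ^ (m - 1) * pd3 m = 0 := by
  obtain ⟨k, rfl⟩ : ∃ k, m = k + 1 := ⟨m - 1, (Nat.succ_pred_eq_of_pos hm).symm⟩
  unfold pa pb pc pd2 pd3
  have h1 : 3 * (k + 1) - 1 = 3 * k + 2 := by omega
  have h2 : 2 * (k + 1) - 1 = 2 * k + 1 := by omega
  have h3 : (k + 1) - 1 = k := by omega
  have h4 : 5 * (k + 1) - 2 = 5 * k + 3 := by omega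
  have h5 : 3 * (k + 1) - 2 = 3 * k + 1 := by omega
  have h6 : 4 * (k + 1) - 2 = 4 * k + 2 := by omega
  have h7 : 4 * (k + 1) - 1 = 4 * k + 3 := by omega
  have h8 : 8 * (k + 1) - 3 = 8 * k + 5 := by omega
  have h9 : 7 * (k + 1) - 2 = 7 * k + 5 := by omega
  rw [h1, h2, h3, h4, h5, h6, h7, h8, h9]
  ring
end

section
/- Let m ≥ 4 be an integer. The determinant of the 6×6 matrix whose rows are indexed by the six monomials x^{m−1}y⁵z^{3m−2}, x^{4m−2}y⁴z^{m−1}, x^{2m−1}y²z^{4m−2}, x^{5m−2}yz^{2m−1}, x^{8m−3}, z^{7m−3} and whose columns record the six second-order partial derivatives (∂²/∂x², ∂²/∂x∂y, ∂²/∂x∂z, ∂²/∂y², ∂²/∂y∂z, ∂²/∂z²) evaluated at the point (1,1,1), equals up to sign 4(7m−3)²(8m−3)²(7m−4)(8m−4)(51m²−43m+9); in particular this determinant is nonzero. -/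
/-- The exponent triples of the six monomials of weighted degree `(7m−3)(8m−3)`. -/
def expTriples (m : ℤ) : Fin 6 → ℤ × ℤ × ℤ :=
  ![(m - 1, 5, 3 * m - 2), (4 * m - 2, 4, m - 1), (2 * m - 1, 2, 4 * m - 2),
    (5 * m - 2, 1, 2 * m - 1), (8 * m - 3, 0, 0), (0, 0, 7 * m - 3)]

/-- The matrix of second-order partial derivatives of the six monomials at `(1,1,1)`:
for a monomial `x^i y^j z^k`, the six values are `i(i−1), ij, ik, j(j−1), jk, k(k−1)`. -/
def hessMatrix (m : ℤ) : Matrix (Fin 6) (Fin 6) ℤ := fun r s =>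
  let i := (expTriples m r).1
  let j := (expTriples m r).2.1
  let k := (expTriples m r).2.2
  ![i * (i - 1), i * j, i * k, j * (j - 1), j * k, k * (k - 1)] s

set_option maxHeartbeats 20000000 in
set_option maxRecDepth 16000 in
lemma hessMatrix_det (m : ℤ) :
    (hessMatrix m).det =
      -(4 * (7 * m - 3) ^ 2 * (8 * m - 3) ^ 2 * (7 * m - 4) * (8 * m - 4)
        * (51 * m ^ 2 - 43 * m + 9)) := by
  have hM : hessMatrix m =
      !![(m - 1)*((m - 1) - 1), (m - 1)*(5:ℤ), (m - 1)*(3*m - 2), (5:ℤ)*((5:ℤ) - 1), (5:ℤ)*(3*m - 2), (3*m - 2)*((3*m - 2) - 1);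
         (4*m - 2)*((4*m - 2) - 1), (4*m - 2)*(4:ℤ), (4*m - 2)*(m - 1), (4:ℤ)*((4:ℤ) - 1), (4:ℤ)*(m - 1), (m - 1)*((m - 1) - 1);
         (2*m - 1)*((2*m - 1) - 1), (2*m - 1)*(2:ℤ), (2*m - 1)*(4*m - 2), (2:ℤ)*((2:ℤ) - 1), (2:ℤ)*(4*m - 2), (4*m - 2)*((4*m - 2) - 1);
         (5*m - 2)*((5*m - 2) - 1), (5*m - 2)*(1:ℤ), (5*m - 2)*(2*m - 1), (1:ℤ)*((1:ℤ) - 1), (1:ℤ)*(2*m - 1), (2*m - 1)*((2*m - 1) - 1);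
         (8*m - 3)*((8*m - 3) - 1), (8*m - 3)*(0:ℤ), (8*m - 3)*(0:ℤ), (0:ℤ)*((0:ℤ) - 1), (0:ℤ)*(0:ℤ), (0:ℤ)*((0:ℤ) - 1);
         (0:ℤ)*((0:ℤ) - 1), (0:ℤ)*(0:ℤ), (0:ℤ)*(7*m - 3), (0:ℤ)*((0:ℤ) - 1), (0:ℤ)*(7*m - 3), (7*m - 3)*((7*m - 3) - 1)] := by
    ext r s
    fin_cases r <;> fin_cases s <;> rfl
  rw [hM]
  simp only [Matrix.det_succ_row_zero, Fin.sum_univ_succ, Fin.sum_univ_zero, Matrix.det_isEmpty,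
    Fin.succAbove_zero, Fin.succ_succAbove_succ, Fin.succ_succAbove_zero, Fin.zero_succAbove,
    Matrix.submatrix_apply, Matrix.of_apply, Matrix.cons_val_succ, Matrix.cons_val_zero,
    Fin.val_zero, Fin.val_succ]
  ring

/-- For `m ≥ 4`, the determinant of the `6×6` matrix of second-order partials of the six
monomials evaluated at `(1,1,1)` equals, up to sign,
`4(7m−3)²(8m−3)²(7m−4)(8m−4)(51m²−43m+9)`; in particular it is nonzero. -/
theorem stmt8 (m : ℤ) (hm : 4 ≤ m) :
    ((hessMatrix m).det =
        4 * (7 * m - 3) ^ 2 * (8 * m - 3) ^ 2 * (7 * m - 4) * (8 * m - 4)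
          * (51 * m ^ 2 - 43 * m + 9) ∨
      (hessMatrix m).det =
        -(4 * (7 * m - 3) ^ 2 * (8 * m - 3) ^ 2 * (7 * m - 4) * (8 * m - 4)
          * (51 * m ^ 2 - 43 * m + 9))) ∧
    (hessMatrix m).det ≠ 0 := by
  have hdet := hessMatrix_det m
  refine ⟨Or.inr hdet, ?_⟩
  rw [hdet]
  have h1 : 0 < 7 * m - 3 := by linarith
  have h2 : 0 < 8 * m - 3 := by linarith
  have h3 : 0 < 7 * m - 4 := by linarith
  have h4 : 0 < 8 * m - 4 := by linarith
  have h5 : 0 < 51 * m ^ 2 - 43 * m + 9 := by nlinarith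
  have h6 : 0 < 4 * (7 * m - 3) ^ 2 * (8 * m - 3) ^ 2 * (7 * m - 4) * (8 * m - 4)
      * (51 * m ^ 2 - 43 * m + 9) := by positivity
  omega
end

section
/- Let N be a free ℤ-module with basis-like generators e₁,…,e_{n−2} subject to e₁+…+e_{n−2}=0, partition {1,…,n−2} = S₁ ⊔ S₂ ⊔ S₃ into sets of sizes a+2, b+2, c+2 where a,b,c are positive pairwise coprime integers, fix nᵢ ∈ Sᵢ, and let N'' ⊆ N be the subgroup generated by the vectors e_{nᵢ} + e_r for r ∈ Sᵢ∖{nᵢ}, i = 1,2,3. Then the quotient N' = N/N'' is a free ℤ-module of rank 2 (torsion-free), it is generated by the images π(e_{n₁}), π(e_{n₂}), π(e_{n₃}), and a·π(e_{n₁}) + b·π(e_{n₂}) + c·π(e_{n₃}) = 0. -/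
open Submodule

lemma sumSplit14 {M : Type*} [AddCommGroup M] {k a b c : ℕ}
    (S₁ S₂ S₃ : Finset (Fin k))
    (h12 : Disjoint S₁ S₂) (h23 : Disjoint S₂ S₃) (h13 : Disjoint S₁ S₃)
    (hcover : S₁ ∪ S₂ ∪ S₃ = Finset.univ)
    (hS₁ : S₁.card = a + 2) (hS₂ : S₂.card = b + 2) (hS₃ : S₃.card = c + 2)
    (n₁ n₂ n₃ : Fin k) (hn₁ : n₁ ∈ S₁) (hn₂ : n₂ ∈ S₂) (hn₃ : n₃ ∈ S₃)
    (h : Fin k → M)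
    (h1 : ∀ r ∈ S₁.erase n₁, h r = -h n₁)
    (h2 : ∀ r ∈ S₂.erase n₂, h r = -h n₂)
    (h3 : ∀ r ∈ S₃.erase n₃, h r = -h n₃) :
    ∑ r, h r = -((a : ℤ) • h n₁ + (b : ℤ) • h n₂ + (c : ℤ) • h n₃) := by
  have key : ∀ (S : Finset (Fin k)) (m : ℕ) (x : Fin k), x ∈ S → S.card = m + 2 →
      (∀ r ∈ S.erase x, h r = -h x) → ∑ r ∈ S, h r = -((m : ℤ) • h x) := by
    intro S m x hx hcard hrel
    rw [← Finset.add_sum_erase _ _ hx, Finset.sum_congr rfl hrel, Finset.sum_const,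
      Finset.card_erase_of_mem hx, hcard]
    have hm : m + 2 - 1 = m + 1 := rfl
    rw [hm, ← natCast_zsmul]
    push_cast
    module
  have hd : Disjoint (S₁ ∪ S₂) S₃ := Finset.disjoint_union_left.mpr ⟨h13, h23⟩
  have h0 : ∑ r, h r = ∑ r ∈ S₁ ∪ S₂ ∪ S₃, h r := by rw [hcover]
  rw [h0, Finset.sum_union hd, Finset.sum_union h12,
    key S₁ a n₁ hn₁ hS₁ h1, key S₂ b n₂ hn₂ hS₂ h2, key S₃ c n₃ hn₃ hS₃ h3]
  abel

/-- Let `N = ℤ^{n−2}/⟨e₁+…+e_{n−2}⟩`, partition `{1,…,n−2} = S₁ ⊔ S₂ ⊔ S₃` into sets of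
sizes `a+2, b+2, c+2` (with `a,b,c` positive and pairwise coprime, `n = a+b+c+8`), fix
`nᵢ ∈ Sᵢ`, and let `N'' ⊆ N` be generated by the `e_{nᵢ} + e_r`, `r ∈ Sᵢ∖{nᵢ}`.
Then `N' = N/N''` is free of rank 2, generated by `π(e_{n₁}), π(e_{n₂}), π(e_{n₃})`, and
`a·π(e_{n₁}) + b·π(e_{n₂}) + c·π(e_{n₃}) = 0`. -/
theorem stmt14 (a b c : ℕ) (ha : 0 < a) (hb : 0 < b) (hc : 0 < c)
    (hab : Nat.Coprime a b) (hbc : Nat.Coprime b c) (hac : Nat.Coprime a c)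
    (n : ℕ) (hn : n = a + b + c + 8)
    (S₁ S₂ S₃ : Finset (Fin (n - 2)))
    (h12 : Disjoint S₁ S₂) (h23 : Disjoint S₂ S₃) (h13 : Disjoint S₁ S₃)
    (hcover : S₁ ∪ S₂ ∪ S₃ = Finset.univ)
    (hS₁ : S₁.card = a + 2) (hS₂ : S₂.card = b + 2) (hS₃ : S₃.card = c + 2)
    (n₁ n₂ n₃ : Fin (n - 2)) (hn₁ : n₁ ∈ S₁) (hn₂ : n₂ ∈ S₂) (hn₃ : n₃ ∈ S₃) :
    let V : Type := Fin (n - 2) → ℤ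
    let e : Fin (n - 2) → V := fun i => Pi.single i 1
    let N := V ⧸ (span ℤ {∑ i, e i})
    let q : V →ₗ[ℤ] N := mkQ (span ℤ {∑ i, e i})
    let N'' : Submodule ℤ N := span ℤ
      (q '' ((fun r => e n₁ + e r) '' (S₁.erase n₁ : Set (Fin (n - 2))) ∪
             (fun r => e n₂ + e r) '' (S₂.erase n₂ : Set (Fin (n - 2))) ∪
             (fun r => e n₃ + e r) '' (S₃.erase n₃ : Set (Fin (n - 2)))))
    let N' := N ⧸ N''
    let π : V →ₗ[ℤ] N' := (mkQ N'').comp q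
    Module.Free ℤ N' ∧ Module.finrank ℤ N' = 2 ∧
      span ℤ {π (e n₁), π (e n₂), π (e n₃)} = ⊤ ∧
      (a : ℤ) • π (e n₁) + (b : ℤ) • π (e n₂) + (c : ℤ) • π (e n₃) = 0 := by
  intro V e N q N'' N' π
  classical
  -- Bezout coefficients for a and b
  have hcop : IsCoprime (a : ℤ) (b : ℤ) := by
    rw [Int.isCoprime_iff_gcd_eq_one, Int.gcd_natCast_natCast]
    exact hab
  obtain ⟨u, v, huv⟩ := hcop
  -- target vectors in ℤ²
  set w1 : Fin 2 → ℤ := ![(b : ℤ), -(c * u)] with hw1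
  set w2 : Fin 2 → ℤ := ![-(a : ℤ), -(c * v)] with hw2
  set w3 : Fin 2 → ℤ := ![0, 1] with hw3
  have hn₂1 : n₂ ∉ S₁ := fun h => (Finset.disjoint_left.mp h12) h hn₂
  have hn₃1 : n₃ ∉ S₁ := fun h => (Finset.disjoint_left.mp h13) h hn₃
  have hn₃2 : n₃ ∉ S₂ := Finset.disjoint_right.mp h23 hn₃
  set w : Fin (n - 2) → (Fin 2 → ℤ) := fun r =>
    if r ∈ S₁ then (if r = n₁ then w1 else -w1)
    else if r ∈ S₂ then (if r = n₂ then w2 else -w2)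
    else (if r = n₃ then w3 else -w3) with hwdef
  have hwn₁ : w n₁ = w1 := by simp [hwdef, hn₁]
  have hwn₂ : w n₂ = w2 := by simp [hwdef, hn₂, hn₂1]
  have hwn₃ : w n₃ = w3 := by simp [hwdef, hn₃1, hn₃2]
  have hwe1 : ∀ r ∈ S₁.erase n₁, w r = -w n₁ := by
    intro r hr
    rw [Finset.mem_erase] at hr
    simp [hwdef, hr.1, hr.2, hn₁]
  have hwe2 : ∀ r ∈ S₂.erase n₂, w r = -w n₂ := by
    intro r hr
    rw [Finset.mem_erase] at hr
    have : r ∉ S₁ := fun h => (Finset.disjoint_left.mp h12) h hr.2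
    simp [hwdef, hr.1, hr.2, this, hn₂, hn₂1]
  have hwe3 : ∀ r ∈ S₃.erase n₃, w r = -w n₃ := by
    intro r hr
    rw [Finset.mem_erase] at hr
    have h1' : r ∉ S₁ := fun h => (Finset.disjoint_left.mp h13) h hr.2
    have h2' : r ∉ S₂ := fun h => (Finset.disjoint_left.mp h23) h hr.2
    simp [hwdef, hr.1, h1', h2', hn₃1, hn₃2]
  have hwrel : (a : ℤ) • w1 + (b : ℤ) • w2 + (c : ℤ) • w3 = 0 := by
    funext i
    fin_cases i <;>
      simp only [Fin.mk_zero, Fin.mk_one, Fin.isValue, hw1, hw2, hw3, Pi.add_apply,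
        Pi.smul_apply, smul_eq_mul, Matrix.cons_val_zero, Matrix.cons_val_one,
        Matrix.head_cons, Pi.zero_apply]
    · ring
    · linear_combination (-(c : ℤ)) * huv
  -- the linear map f : V → ℤ²
  set f : V →ₗ[ℤ] (Fin 2 → ℤ) := Fintype.linearCombination ℤ w with hfdef
  have hfe : ∀ r, f (e r) = w r := by
    intro r
    have h' : Fintype.linearCombination ℤ w (Pi.single r (1 : ℤ)) = (1 : ℤ) • w r :=
      Fintype.linearCombination_apply_single ℤ w r 1
    rw [one_smul] at h'
    exact h'
  have hfsum : f (∑ i, e i) = 0 := by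
    rw [map_sum]
    calc ∑ i, f (e i) = ∑ i, w i := by simp only [hfe]
      _ = -((a : ℤ) • w n₁ + (b : ℤ) • w n₂ + (c : ℤ) • w n₃) :=
          sumSplit14 S₁ S₂ S₃ h12 h23 h13 hcover hS₁ hS₂ hS₃ n₁ n₂ n₃ hn₁ hn₂ hn₃ w hwe1 hwe2 hwe3
      _ = 0 := by rw [hwn₁, hwn₂, hwn₃, hwrel, neg_zero]
  have hker1 : span ℤ {∑ i, e i} ≤ LinearMap.ker f := by
    rw [span_le, Set.singleton_subset_iff]
    exact hfsum
  set f₁ : N →ₗ[ℤ] (Fin 2 → ℤ) := liftQ _ f hker1 with hf₁def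
  have hf₁q : ∀ x : V, f₁ (q x) = f x := fun x => rfl
  -- basic facts about π
  have hπ : ∀ x : V, π x = mkQ N'' (q x) := fun x => rfl
  have hπ0 : ∀ x : V, q x ∈ N'' → π x = 0 := by
    intro x hx
    rw [hπ, mkQ_apply, Quotient.mk_eq_zero]
    exact hx
  have hπsurj : Function.Surjective π := by
    intro x
    obtain ⟨y, rfl⟩ := mkQ_surjective N'' x
    obtain ⟨z, rfl⟩ := mkQ_surjective _ y
    exact ⟨z, rfl⟩
  -- the relations in N'
  have hπ1 : ∀ r ∈ S₁.erase n₁, π (e r) = -π (e n₁) := by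
    intro r hr
    have h0 : π (e n₁ + e r) = 0 := by
      apply hπ0
      exact subset_span (Set.mem_image_of_mem _
        (Set.mem_union_left _ (Set.mem_union_left _ ⟨r, by exact_mod_cast hr, rfl⟩)))
    rw [map_add] at h0
    exact eq_neg_of_add_eq_zero_right h0
  have hπ2 : ∀ r ∈ S₂.erase n₂, π (e r) = -π (e n₂) := by
    intro r hr
    have h0 : π (e n₂ + e r) = 0 := by
      apply hπ0
      exact subset_span (Set.mem_image_of_mem _
        (Set.mem_union_left _ (Set.mem_union_right _ ⟨r, by exact_mod_cast hr, rfl⟩)))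
    rw [map_add] at h0
    exact eq_neg_of_add_eq_zero_right h0
  have hπ3 : ∀ r ∈ S₃.erase n₃, π (e r) = -π (e n₃) := by
    intro r hr
    have h0 : π (e n₃ + e r) = 0 := by
      apply hπ0
      exact subset_span (Set.mem_image_of_mem _
        (Set.mem_union_right _ ⟨r, by exact_mod_cast hr, rfl⟩))
    rw [map_add] at h0
    exact eq_neg_of_add_eq_zero_right h0
  have hrel : (a : ℤ) • π (e n₁) + (b : ℤ) • π (e n₂) + (c : ℤ) • π (e n₃) = 0 := by
    have hq0 : q (∑ i, e i) = 0 :=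
      (Quotient.mk_eq_zero (span ℤ {∑ i, e i})).mpr (subset_span rfl)
    have h0 : π (∑ i, e i) = 0 := by rw [hπ, hq0, map_zero]
    rw [map_sum, sumSplit14 S₁ S₂ S₃ h12 h23 h13 hcover hS₁ hS₂ hS₃ n₁ n₂ n₃ hn₁ hn₂ hn₃
      (fun r => π (e r)) hπ1 hπ2 hπ3, neg_eq_zero] at h0
    exact h0
  -- every π (e r) lies in the span of the three distinguished images
  have hmem : ∀ r, π (e r) ∈ span ℤ ({π (e n₁), π (e n₂), π (e n₃)} : Set N') := by
    intro r
    have hr : r ∈ S₁ ∪ S₂ ∪ S₃ := by rw [hcover]; exact Finset.mem_univ r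
    simp only [Finset.mem_union] at hr
    rcases hr with (hr | hr) | hr
    · by_cases hrn : r = n₁
      · subst hrn; exact subset_span (by simp)
      · rw [hπ1 r (Finset.mem_erase.mpr ⟨hrn, hr⟩)]
        exact neg_mem (subset_span (by simp))
    · by_cases hrn : r = n₂
      · subst hrn; exact subset_span (by simp)
      · rw [hπ2 r (Finset.mem_erase.mpr ⟨hrn, hr⟩)]
        exact neg_mem (subset_span (by simp))
    · by_cases hrn : r = n₃
      · subst hrn; exact subset_span (by simp)
      · rw [hπ3 r (Finset.mem_erase.mpr ⟨hrn, hr⟩)]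
        exact neg_mem (subset_span (by simp))
  have hspan : span ℤ ({π (e n₁), π (e n₂), π (e n₃)} : Set N') = ⊤ := by
    rw [eq_top_iff]
    rintro x -
    obtain ⟨y, rfl⟩ := hπsurj x
    have hy : y = ∑ r, y r • e r := by
      funext i
      rw [Finset.sum_apply]
      have h' : ∀ r : Fin (n - 2), (y r • e r) i = if i = r then y r else 0 := by
        intro r
        have he : e r = Pi.single r (1 : ℤ) := rfl
        rw [Pi.smul_apply, he, smul_eq_mul, Pi.single_apply, mul_ite, mul_one, mul_zero]
      rw [Finset.sum_congr rfl fun r _ => h' r, Finset.sum_ite_eq, if_pos (Finset.mem_univ i)]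
    rw [hy, map_sum]
    exact sum_mem fun r _ => by rw [map_smul]; exact smul_mem _ _ (hmem r)
  -- f kills N''
  have hker2 : N'' ≤ LinearMap.ker f₁ := by
    refine span_le.mpr ?_
    rintro x ⟨y, hy, rfl⟩
    rw [SetLike.mem_coe, LinearMap.mem_ker, hf₁q]
    rcases hy with (⟨r, hr, rfl⟩ | ⟨r, hr, rfl⟩) | ⟨r, hr, rfl⟩
    · rw [map_add, hfe, hfe, hwe1 r (by exact_mod_cast hr), hwn₁, add_neg_cancel]
    · rw [map_add, hfe, hfe, hwe2 r (by exact_mod_cast hr), hwn₂, add_neg_cancel]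
    · rw [map_add, hfe, hfe, hwe3 r (by exact_mod_cast hr), hwn₃, add_neg_cancel]
  set fbar : N' →ₗ[ℤ] (Fin 2 → ℤ) := liftQ N'' f₁ hker2 with hfbardef
  have hfbar : ∀ x : V, fbar (π x) = f x := fun x => rfl
  -- the inverse map g
  set z : Fin 2 → N' := ![v • π (e n₁) - u • π (e n₂), π (e n₃)] with hz
  set g : (Fin 2 → ℤ) →ₗ[ℤ] N' := Fintype.linearCombination ℤ z with hgdef
  have hgy : ∀ y : Fin 2 → ℤ, g y = y 0 • z 0 + y 1 • z 1 := by
    intro y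
    rw [hgdef, Fintype.linearCombination_apply, Fin.sum_univ_two]
  have hz0 : z 0 = v • π (e n₁) - u • π (e n₂) := by rw [hz]; rfl
  have hz1 : z 1 = π (e n₃) := by rw [hz]; rfl
  have hfgy : ∀ y : Fin 2 → ℤ, fbar (g y) = y := by
    intro y
    rw [hgy, map_add, map_smul, map_smul, hz0, hz1, map_sub, map_smul, map_smul,
      hfbar, hfbar, hfbar, hfe, hfe, hfe, hwn₁, hwn₂, hwn₃]
    funext i
    fin_cases i <;>
      simp only [Fin.mk_zero, Fin.mk_one, Fin.isValue, hw1, hw2, hw3, Pi.add_apply,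
        Pi.sub_apply, Pi.smul_apply, smul_eq_mul, Matrix.cons_val_zero, Matrix.cons_val_one,
        Matrix.head_cons]
    · linear_combination (y 0) * huv
    · ring
  -- g is a left inverse on the images of the basis vectors
  have hgw1 : g w1 = π (e n₁) := by
    have key : g w1 + u • ((a : ℤ) • π (e n₁) + (b : ℤ) • π (e n₂) + (c : ℤ) • π (e n₃))
        = (u * a + v * b) • π (e n₁) := by
      rw [hgy, hz0, hz1]
      simp only [hw1, Matrix.cons_val_zero, Matrix.cons_val_one, Matrix.head_cons]
      module
    rw [hrel, smul_zero, add_zero, huv, one_smul] at key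
    exact key
  have hgw2 : g w2 = π (e n₂) := by
    have key : g w2 + v • ((a : ℤ) • π (e n₁) + (b : ℤ) • π (e n₂) + (c : ℤ) • π (e n₃))
        = (u * a + v * b) • π (e n₂) := by
      rw [hgy, hz0, hz1]
      simp only [hw2, Matrix.cons_val_zero, Matrix.cons_val_one, Matrix.head_cons]
      module
    rw [hrel, smul_zero, add_zero, huv, one_smul] at key
    exact key
  have hgw3 : g w3 = π (e n₃) := by
    rw [hgy, hz0, hz1]
    simp only [hw3, Matrix.cons_val_zero, Matrix.cons_val_one, Matrix.head_cons]
    rw [zero_smul, one_smul, zero_add]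
  have hgπ : ∀ r, g (w r) = π (e r) := by
    intro r
    have hr : r ∈ S₁ ∪ S₂ ∪ S₃ := by rw [hcover]; exact Finset.mem_univ r
    simp only [Finset.mem_union] at hr
    rcases hr with (hr | hr) | hr
    · by_cases hrn : r = n₁
      · subst hrn; rw [hwn₁, hgw1]
      · rw [hwe1 r (Finset.mem_erase.mpr ⟨hrn, hr⟩), hπ1 r (Finset.mem_erase.mpr ⟨hrn, hr⟩),
          hwn₁, map_neg, hgw1]
    · by_cases hrn : r = n₂
      · subst hrn; rw [hwn₂, hgw2]
      · rw [hwe2 r (Finset.mem_erase.mpr ⟨hrn, hr⟩), hπ2 r (Finset.mem_erase.mpr ⟨hrn, hr⟩),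
          hwn₂, map_neg, hgw2]
    · by_cases hrn : r = n₃
      · subst hrn; rw [hwn₃, hgw3]
      · rw [hwe3 r (Finset.mem_erase.mpr ⟨hrn, hr⟩), hπ3 r (Finset.mem_erase.mpr ⟨hrn, hr⟩),
          hwn₃, map_neg, hgw3]
  have hgf : ∀ x : N', g (fbar x) = x := by
    have hcomp : g.comp f = π := by
      apply Module.Basis.ext (Pi.basisFun ℤ (Fin (n - 2)))
      intro i
      rw [Pi.basisFun_apply]
      show g (f (e i)) = π (e i)
      rw [hfe]
      exact hgπ i
    intro x
    obtain ⟨y, rfl⟩ := hπsurj x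
    rw [hfbar, ← hcomp]
    rfl
  -- assemble the equivalence
  have equiv : N' ≃ₗ[ℤ] (Fin 2 → ℤ) :=
    LinearEquiv.ofLinear fbar g (LinearMap.ext fun y => hfgy y) (LinearMap.ext fun x => hgf x)
  refine ⟨Module.Free.of_equiv equiv.symm, ?_, hspan, hrel⟩
  rw [equiv.finrank_eq, Module.finrank_fin_fun]
end
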